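/- Let λ, μ > 0 be real numbers, ℓ ≥ 1 a natural number, and f : ℝ → ℝ^ℓ a function such that: (a) Σ_{i=1}^ℓ |f_i(x)| ≤ μ for every x with |x| ≤ λ, and (b) f(x + y) = f(x) + f(y) for all x, y with |x| + |y| ≤ λ. Then there exists a vector r = (r_1, …, r_ℓ) ∈ ℝ^ℓ with Σ_{i=1}^ℓ |r_i| ≤ μ/λ such that f(x) = (r_1 x, …, r_ℓ x) for all x with |x| ≤ λ. -/

import Mathlib

/-- an additive germ `f` on `[−λ, λ]` with values in the ℓ¹-ball
of radius `μ` in `ℝ^ℓ` is given by multiplication by a vector of ℓ¹-norm at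
most `μ/λ`. -/
theorem stmt12 (lam mu : ℝ) (hlam : 0 < lam) (hmu : 0 < mu)
    (ℓ : ℕ) (hℓ : 1 ≤ ℓ) (f : ℝ → Fin ℓ → ℝ)
    (hbound : ∀ x : ℝ, |x| ≤ lam → (∑ i, |f x i|) ≤ mu)
    (hadd : ∀ x y : ℝ, |x| + |y| ≤ lam → f (x + y) = f x + f y) :
    ∃ r : Fin ℓ → ℝ, (∑ i, |r i|) ≤ mu / lam ∧
      ∀ x : ℝ, |x| ≤ lam → ∀ i, f x i = r i * x := by
  -- f 0 = 0
  have h0 : f 0 = 0 := by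
    have h := hadd 0 0 (by simpa using hlam.le)
    simp only [add_zero] at h
    exact (add_left_cancel (a := f 0) (by rw [add_zero]; exact h)).symm
  -- scaling by naturals
  have hn : ∀ (n : ℕ) (t : ℝ), (n : ℝ) * |t| ≤ lam →
      f ((n : ℝ) * t) = (n : ℝ) • f t := by
    intro n
    induction n with
    | zero => intro t _; simpa using h0
    | succ n ih =>
      intro t ht
      have habs : (n : ℝ) * |t| ≤ lam := by
        have : (n : ℝ) * |t| ≤ ((n : ℝ) + 1) * |t| := by nlinarith [abs_nonneg t]
        push_cast at ht ⊢; linarith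
      have hsum : |(n : ℝ) * t| + |t| ≤ lam := by
        rw [abs_mul, Nat.abs_cast]
        push_cast at ht; linarith
      have : f (((n : ℝ) + 1) * t) = f ((n : ℝ) * t + t) := by ring_nf
      push_cast
      rw [this, hadd _ _ hsum, ih t habs, add_smul, one_smul]
  -- well-definedness of the extension
  have hwd : ∀ (n m : ℕ) (x : ℝ), 0 < n → 0 < m → |x| ≤ (n : ℝ) * lam →
      |x| ≤ (m : ℝ) * lam → (n : ℝ) • f (x / n) = (m : ℝ) • f (x / m) := by
    have key : ∀ (n m : ℕ) (x : ℝ), 0 < n → 0 < m → |x| ≤ (n : ℝ) * lam →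
        (n : ℝ) • f (x / n) = ((n * m : ℕ) : ℝ) • f (x / (n * m : ℕ)) := by
      intro n m x hn' hm' hx
      have hnr : (0 : ℝ) < (n : ℝ) := by exact_mod_cast hn'
      have hmr : (0 : ℝ) < (m : ℝ) := by exact_mod_cast hm'
      have he : x / (n : ℝ) = (m : ℝ) * (x / ((n * m : ℕ) : ℝ)) := by
        push_cast; field_simp
      have hcond : (m : ℝ) * |x / ((n * m : ℕ) : ℝ)| ≤ lam := by
        rw [abs_div]
        push_cast
        rw [abs_of_pos (by positivity : (0:ℝ) < (n:ℝ) * (m:ℝ))]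
        calc (m : ℝ) * (|x| / ((n:ℝ) * (m:ℝ))) = |x| / (n : ℝ) := by field_simp
          _ ≤ lam := by rw [div_le_iff₀ hnr]; nlinarith
      rw [he, hn m _ hcond, smul_smul]
      congr 1
      push_cast
      ring
    intro n m x hn' hm' hxn hxm
    rw [key n m x hn' hm' hxn, key m n x hm' hn' hxm, Nat.mul_comm]
  -- the extension
  set N : ℝ → ℕ := fun x => ⌈|x| / lam⌉₊ + 1 with hN
  have hNx : ∀ x : ℝ, |x| ≤ ((N x : ℝ)) * lam := by
    intro x
    have h1 : |x| / lam ≤ (⌈|x| / lam⌉₊ : ℝ) := Nat.le_ceil _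
    have : (⌈|x| / lam⌉₊ : ℝ) ≤ (N x : ℝ) := by simp [hN]
    rw [div_le_iff₀ hlam] at h1
    nlinarith
  have hNpos : ∀ x : ℝ, 0 < N x := fun x => Nat.succ_pos _
  set F : ℝ → Fin ℓ → ℝ := fun x => ((N x : ℝ)) • f (x / N x) with hF
  -- F agrees with f on the germ
  have hFf : ∀ x : ℝ, |x| ≤ lam → F x = f x := by
    intro x hx
    have hne : ((N x : ℝ)) ≠ 0 := by exact_mod_cast (hNpos x).ne'
    have hc : (N x : ℝ) * |x / (N x : ℝ)| ≤ lam := by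
      rw [abs_div, abs_of_pos (by exact_mod_cast hNpos x : (0:ℝ) < (N x : ℝ))]
      rw [mul_div_cancel₀ _ hne]
      exact hx
    have := hn (N x) (x / N x) hc
    rw [mul_div_cancel₀ _ hne] at this
    rw [hF]; exact this.symm
  -- F is additive
  have hFadd : ∀ x y : ℝ, F (x + y) = F x + F y := by
    intro x y
    set M : ℕ := N x + N y with hM
    have hMpos : 0 < M := by positivity
    have hMr : (0 : ℝ) < (M : ℝ) := by exact_mod_cast hMpos
    have hxM : |x| ≤ (M : ℝ) * lam := by
      refine (hNx x).trans ?_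
      have : (N x : ℝ) ≤ (M : ℝ) := by exact_mod_cast Nat.le_add_right _ _
      nlinarith
    have hyM : |y| ≤ (M : ℝ) * lam := by
      refine (hNx y).trans ?_
      have : (N y : ℝ) ≤ (M : ℝ) := by exact_mod_cast Nat.le_add_left _ _
      nlinarith
    have hxyM : |x + y| ≤ (M : ℝ) * lam := by
      have hM' : (M : ℝ) = (N x : ℝ) + (N y : ℝ) := by rw [hM]; push_cast; ring
      calc |x + y| ≤ |x| + |y| := abs_add_le x y
        _ ≤ (N x : ℝ) * lam + (N y : ℝ) * lam := add_le_add (hNx x) (hNx y)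
        _ = (M : ℝ) * lam := by rw [hM']; ring
    have e1 : F (x + y) = (M : ℝ) • f ((x + y) / M) :=
      hwd (N (x + y)) M (x + y) (hNpos _) hMpos (hNx _) hxyM
    have e2 : F x = (M : ℝ) • f (x / M) :=
      hwd (N x) M x (hNpos _) hMpos (hNx _) hxM
    have e3 : F y = (M : ℝ) • f (y / M) :=
      hwd (N y) M y (hNpos _) hMpos (hNx _) hyM
    have hsplit : |x / (M : ℝ)| + |y / (M : ℝ)| ≤ lam := by
      rw [abs_div, abs_div, abs_of_pos hMr, ← add_div, div_le_iff₀ hMr,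
        mul_comm lam (M : ℝ)]
      have hM' : (M : ℝ) * lam = (N x : ℝ) * lam + (N y : ℝ) * lam := by
        push_cast [hM]; ring
      linarith [hNx x, hNx y]
    rw [e1, e2, e3]
    have : (x + y) / (M : ℝ) = x / M + y / M := by ring
    rw [this, hadd _ _ hsplit, smul_add]
  -- single coordinate bound
  have hcoord : ∀ (t : ℝ), |t| ≤ lam → ∀ i, |f t i| ≤ mu := by
    intro t ht i
    refine le_trans ?_ (hbound t ht)
    exact Finset.single_le_sum (f := fun j => |f t j|) (fun j _ => abs_nonneg _)
      (Finset.mem_univ i)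
  -- f is small near 0: |f t i| ≤ (2*mu/lam) * |t| for |t| ≤ lam/2
  have hsmall : ∀ t : ℝ, |t| ≤ lam / 2 → ∀ i, |f t i| ≤ (2 * mu / lam) * |t| := by
    intro t ht i
    rcases eq_or_ne t 0 with rfl | htne
    · simp [h0]
    · have htpos : 0 < |t| := abs_pos.mpr htne
      set n : ℕ := ⌊lam / |t|⌋₊ with hn'
      have hfl : (n : ℝ) ≤ lam / |t| := Nat.floor_le (by positivity)
      have hfl2 : lam / |t| < (n : ℝ) + 1 := Nat.lt_floor_add_one _
      have hn1 : 1 ≤ n := by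
        rw [Nat.one_le_iff_ne_zero, hn', ← Nat.pos_iff_ne_zero, Nat.floor_pos]
        rw [le_div_iff₀ htpos]; linarith
      have hnr : (0 : ℝ) < (n : ℝ) := by exact_mod_cast hn1
      have hmul : (n : ℝ) * |t| ≤ lam := by
        have h := mul_le_mul_of_nonneg_right hfl htpos.le
        rwa [div_mul_cancel₀ _ htpos.ne'] at h
      have := hn n t hmul
      have hb : |f ((n : ℝ) * t) i| ≤ mu := by
        apply hcoord _ _ i
        rw [abs_mul, Nat.abs_cast]; exact hmul
      rw [this] at hb
      have hb2 : (n : ℝ) * |f t i| ≤ mu := by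
        rw [Pi.smul_apply, smul_eq_mul, abs_mul, Nat.abs_cast] at hb
        exact hb
      -- n + 1 > lam/|t| and n ≥ 1 so 2n ≥ lam/|t|, i.e. n ≥ lam/(2|t|)
      have h2n : lam / |t| ≤ 2 * (n : ℝ) := by
        have : (1 : ℝ) ≤ (n : ℝ) := by exact_mod_cast hn1
        linarith
      have hnge : lam ≤ 2 * (n : ℝ) * |t| := by
        rw [div_le_iff₀ htpos] at h2n; linarith
      have hfpos : 0 ≤ |f t i| := abs_nonneg _
      rw [div_mul_eq_mul_div, le_div_iff₀ hlam]
      nlinarith [mul_le_mul_of_nonneg_right hnge hfpos,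
        mul_le_mul_of_nonneg_left hb2 htpos.le]
  -- continuity of F at 0
  have hFcont0 : ContinuousAt F 0 := by
    rw [continuousAt_pi]
    intro i
    have heq : ∀ t : ℝ, |t| ≤ lam / 2 → |F t i - 0| ≤ (2 * mu / lam) * |t| := by
      intro t ht
      rw [hFf t (ht.trans (by linarith))]
      simpa using hsmall t ht i
    rw [Metric.continuousAt_iff]
    intro ε hε
    refine ⟨min (lam / 2) (ε * lam / (4 * mu)), by positivity, fun {t} hdist => ?_⟩
    have ht1 : |t| ≤ lam / 2 := by
      have := hdist.le
      rw [Real.dist_eq, sub_zero] at this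
      exact this.trans ((min_le_left _ _))
    have ht2 : |t| < ε * lam / (4 * mu) := by
      have := hdist
      rw [Real.dist_eq, sub_zero] at this
      exact lt_of_lt_of_le this (min_le_right _ _)
    have hb := heq t ht1
    have hF0 : F 0 i = 0 := by
      rw [hFf 0 (by simp; linarith), h0]; rfl
    rw [Real.dist_eq, hF0, sub_zero]
    calc |F t i| = |F t i - 0| := by rw [sub_zero]
      _ ≤ (2 * mu / lam) * |t| := hb
      _ < (2 * mu / lam) * (ε * lam / (4 * mu)) := by
          apply mul_lt_mul_of_pos_left ht2 (by positivity)
      _ = ε / 2 := by field_simp; ring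
      _ < ε := by linarith
  -- bundle as AddMonoidHom and get linearity
  have hF0' : F 0 = 0 := by rw [hFf 0 (by simp; linarith), h0]
  set Fhom : ℝ →+ (Fin ℓ → ℝ) := AddMonoidHom.mk' F hFadd with hFhom
  have hFcont : Continuous Fhom := by
    apply continuous_of_continuousAt_zero Fhom
    exact hFcont0
  have hlin : ∀ x : ℝ, F x = x • F 1 := by
    intro x
    have := map_real_smul Fhom hFcont x 1
    simpa [hFhom, smul_eq_mul, mul_one] using this
  refine ⟨F 1, ?_, ?_⟩
  · -- bound on sum
    have hFlam : F lam = f lam := hFf lam (by rw [abs_of_pos hlam])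
    have : f lam = lam • F 1 := by rw [← hFlam, hlin]
    have hcoord' : ∀ i, F 1 i = f lam i / lam := by
      intro i
      have h1 : f lam i = lam * F 1 i := by rw [this]; simp [smul_eq_mul]
      rw [h1, mul_div_cancel_left₀ _ hlam.ne']
    calc (∑ i, |F 1 i|) = ∑ i, |f lam i| / lam := by
          refine Finset.sum_congr rfl fun i _ => ?_
          rw [hcoord' i, abs_div, abs_of_pos hlam]
      _ = (∑ i, |f lam i|) / lam := by rw [Finset.sum_div]
      _ ≤ mu / lam := by
          gcongr
          exact hbound lam (by rw [abs_of_pos hlam])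
  · intro x hx i
    rw [← hFf x hx, hlin x]
    simp [Pi.smul_apply, smul_eq_mul, mul_comm]
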